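/- Let xi_1, ..., xi_m be independent mean-zero random variables with finite nonzero variances, let c_1, ..., c_m be real numbers with \sum_i c_i^2 = 1, and set W = \sum_i c_i xi_i. Let xi_i^* have the xi_i-zero biased distribution, independent of the other variables, and let I be a random index independent of everything with P(I = i) = c_i^2 Var(xi_i)/Var(W) renormalized so that \sum c_i^2 E xi_i^2 is the total variance. If Var(W)=1 and P(I=i) = c_i^2 E xi_i^2, then W^* = W - c_I xi_I + c_I xi_I^* has the W-zero biased distribution. -/

import Mathlib

open MeasureTheory ProbabilityTheory

/-- `Wstar` has the `W`-zero biased distribution: for all absolutely continuous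
(here: differentiable) `f` with `E|W f(W)| < ∞`,
`E[W f(W)] = Var(W) E[f'(W*)]`. -/
def IsZeroBiased {Ω : Type*} [MeasurableSpace Ω] (μ : Measure Ω) (W Wstar : Ω → ℝ) : Prop :=
  ∀ f : ℝ → ℝ, Differentiable ℝ f →
    Integrable (fun ω => W ω * f (W ω)) μ →
    Integrable (fun ω => deriv f (Wstar ω)) μ →
    ∫ ω, W ω * f (W ω) ∂μ = variance W μ * ∫ ω, deriv f (Wstar ω) ∂μ

/-- Index type for the joint family `(I, ξ₁,…,ξ_m, ξ₁*,…,ξ_m*)`. -/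
def ZBIdx (m : ℕ) : Option (Fin m ⊕ Fin m) → Type
  | none => Fin m
  | some _ => ℝ

instance (m : ℕ) (o : Option (Fin m ⊕ Fin m)) : MeasurableSpace (ZBIdx m o) := by
  cases o with
  | none => exact (inferInstance : MeasurableSpace (Fin m))
  | some _ => exact (inferInstance : MeasurableSpace ℝ)

/-- The joint family of random variables. -/
def ZBFam {Ω : Type*} (m : ℕ) (ξ ξs : Fin m → Ω → ℝ) (I : Ω → Fin m) :
    (o : Option (Fin m ⊕ Fin m)) → Ω → ZBIdx m o
  | none => I
  | some (Sum.inl i) => ξ i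
  | some (Sum.inr i) => ξs i

section Aux

lemma zb_deriv_affine (f : ℝ → ℝ) (hf : Differentiable ℝ f) (w a x : ℝ) :
    deriv (fun y => f (w + a * y)) x = a * deriv f (w + a * x) := by
  have h1 : HasDerivAt (fun y : ℝ => w + a * y) a x := by
    simpa using ((hasDerivAt_id x).const_mul a).const_add w
  have h2 := (hf (w + a * x)).hasDerivAt.comp x h1
  simp only [Function.comp_def] at h2
  rw [h2.deriv, mul_comm]

variable {Ω : Type*} [MeasurableSpace Ω] {μ : Measure Ω}
  {m : ℕ} (c : Fin m → ℝ) {ξ ξs : Fin m → Ω → ℝ} {I : Ω → Fin m}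

lemma zb_meas_fam (hmeasξ : ∀ i, Measurable (ξ i)) (hmeasξs : ∀ i, Measurable (ξs i))
    (hmeasI : Measurable I) : ∀ o, Measurable (ZBFam m ξ ξs I o) := by
  rintro (_ | i | i)
  · exact hmeasI
  · exact hmeasξ i
  · exact hmeasξs i

variable (hmeasξ : ∀ i, Measurable (ξ i)) (hmeasξs : ∀ i, Measurable (ξs i))
    (hmeasI : Measurable I)
    (hindep : iIndepFun (ZBFam m ξ ξs I) μ)

include hmeasξ hmeasξs hmeasI hindep

lemma zb_indep1 (i : Fin m) :
    IndepFun (fun ω => ∑ j ∈ Finset.univ.erase i, c j * ξ j ω) (ξ i) μ := by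
  classical
  set S : Finset (Option (Fin m ⊕ Fin m)) :=
    (Finset.univ.erase i).image (fun j => some (Sum.inl j)) with hS
  set T : Finset (Option (Fin m ⊕ Fin m)) := {some (Sum.inl i)} with hT
  have hST : Disjoint S T := by
    simp only [hS, hT, Finset.disjoint_singleton_right, Finset.mem_image]
    rintro ⟨j, hj, hje⟩
    simp at hje
    exact (Finset.mem_erase.mp hj).1 hje
  have hbase := hindep.indepFun_finset S T hST (zb_meas_fam hmeasξ hmeasξs hmeasI)
  have hmemS : ∀ j ∈ Finset.univ.erase i, some (Sum.inl j) ∈ S := fun j hj =>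
    Finset.mem_image_of_mem _ hj
  set φ : (∀ o : S, ZBIdx m o) → ℝ := fun v =>
    ∑ j ∈ (Finset.univ.erase i).attach,
      c j.1 * (show ℝ from v ⟨some (Sum.inl j.1), hmemS j.1 j.2⟩) with hφ
  set ψ : (∀ o : T, ZBIdx m o) → ℝ := fun v =>
    (show ℝ from v ⟨some (Sum.inl i), Finset.mem_singleton_self _⟩) with hψ
  have hφm : Measurable φ := by
    apply Finset.measurable_sum
    intro j _
    have : Measurable fun v : (∀ o : S, ZBIdx m o) =>
        (show ℝ from v ⟨some (Sum.inl j.1), hmemS j.1 j.2⟩) := measurable_pi_apply _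
    exact this.const_mul _
  have hψm : Measurable ψ := measurable_pi_apply _
  have h2 := hbase.comp hφm hψm
  refine IndepFun.congr h2 (Filter.Eventually.of_forall fun ω => ?_)
    (Filter.Eventually.of_forall fun ω => rfl)
  show φ (fun o : S => ZBFam m ξ ξs I o ω) = _
  exact Finset.sum_attach (Finset.univ.erase i) (fun j => c j * ξ j ω)

lemma zb_indep2 (i : Fin m) :
    IndepFun (fun ω => ∑ j ∈ Finset.univ.erase i, c j * ξ j ω) (ξs i) μ := by
  classical
  set S : Finset (Option (Fin m ⊕ Fin m)) :=
    (Finset.univ.erase i).image (fun j => some (Sum.inl j)) with hS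
  set T : Finset (Option (Fin m ⊕ Fin m)) := {some (Sum.inr i)} with hT
  have hST : Disjoint S T := by
    simp only [hS, hT, Finset.disjoint_singleton_right, Finset.mem_image]
    rintro ⟨j, hj, hje⟩
    simp at hje
  have hbase := hindep.indepFun_finset S T hST (zb_meas_fam hmeasξ hmeasξs hmeasI)
  have hmemS : ∀ j ∈ Finset.univ.erase i, some (Sum.inl j) ∈ S := fun j hj =>
    Finset.mem_image_of_mem _ hj
  set φ : (∀ o : S, ZBIdx m o) → ℝ := fun v =>
    ∑ j ∈ (Finset.univ.erase i).attach,
      c j.1 * (show ℝ from v ⟨some (Sum.inl j.1), hmemS j.1 j.2⟩) with hφ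
  set ψ : (∀ o : T, ZBIdx m o) → ℝ := fun v =>
    (show ℝ from v ⟨some (Sum.inr i), Finset.mem_singleton_self _⟩) with hψ
  have hφm : Measurable φ := by
    apply Finset.measurable_sum
    intro j _
    have : Measurable fun v : (∀ o : S, ZBIdx m o) =>
        (show ℝ from v ⟨some (Sum.inl j.1), hmemS j.1 j.2⟩) := measurable_pi_apply _
    exact this.const_mul _
  have hψm : Measurable ψ := measurable_pi_apply _
  have h2 := hbase.comp hφm hψm
  refine IndepFun.congr h2 (Filter.Eventually.of_forall fun ω => ?_)
    (Filter.Eventually.of_forall fun ω => rfl)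
  show φ (fun o : S => ZBFam m ξ ξs I o ω) = _
  exact Finset.sum_attach (Finset.univ.erase i) (fun j => c j * ξ j ω)

lemma zb_indep3 (i : Fin m) :
    IndepFun I
      (fun ω => (∑ j ∈ Finset.univ.erase i, c j * ξ j ω) + c i * ξs i ω) μ := by
  classical
  set S : Finset (Option (Fin m ⊕ Fin m)) := {none} with hS
  set T : Finset (Option (Fin m ⊕ Fin m)) := Finset.univ.image some with hT
  have hST : Disjoint S T := by
    simp only [hS, hT, Finset.disjoint_singleton_left, Finset.mem_image]
    rintro ⟨j, _, hje⟩
    simp at hje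
  have hbase := hindep.indepFun_finset S T hST (zb_meas_fam hmeasξ hmeasξs hmeasI)
  have hmemT : ∀ s : Fin m ⊕ Fin m, some s ∈ T := fun s =>
    Finset.mem_image_of_mem _ (Finset.mem_univ s)
  set φ : (∀ o : S, ZBIdx m o) → Fin m := fun v =>
    (show Fin m from v ⟨none, Finset.mem_singleton_self _⟩) with hφ
  set ψ : (∀ o : T, ZBIdx m o) → ℝ := fun v =>
    (∑ j ∈ (Finset.univ.erase i).attach,
      c j.1 * (show ℝ from v ⟨some (Sum.inl j.1), hmemT _⟩))
    + c i * (show ℝ from v ⟨some (Sum.inr i), hmemT _⟩) with hψ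
  have hφm : Measurable φ := measurable_pi_apply _
  have hψm : Measurable ψ := by
    apply Measurable.add
    · apply Finset.measurable_sum
      intro j _
      have : Measurable fun v : (∀ o : T, ZBIdx m o) =>
          (show ℝ from v ⟨some (Sum.inl j.1), hmemT _⟩) := measurable_pi_apply _
      exact this.const_mul _
    · have : Measurable fun v : (∀ o : T, ZBIdx m o) =>
          (show ℝ from v ⟨some (Sum.inr i), hmemT _⟩) := measurable_pi_apply _
      exact this.const_mul _
  have h2 := hbase.comp hφm hψm
  refine IndepFun.congr h2 (Filter.Eventually.of_forall fun ω => rfl)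
    (Filter.Eventually.of_forall fun ω => ?_)
  show ψ (fun o : T => ZBFam m ξ ξs I o ω) = _
  simp only [hψ]
  congr 1
  exact Finset.sum_attach (Finset.univ.erase i) (fun j => c j * ξ j ω)

end Aux

section Main

variable {Ω : Type*} [MeasurableSpace Ω]

theorem zb_bounded (μ : Measure Ω) [IsProbabilityMeasure μ]
    (m : ℕ) (c : Fin m → ℝ) (ξ ξs : Fin m → Ω → ℝ) (I : Ω → Fin m)
    (hmeasξ : ∀ i, Measurable (ξ i)) (hmeasξs : ∀ i, Measurable (ξs i))
    (hmeasI : Measurable I)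
    (hL2 : ∀ i, MemLp (ξ i) 2 μ)
    (hmean : ∀ i, ∫ ω, ξ i ω ∂μ = 0)
    (hvarpos : ∀ i, 0 < variance (ξ i) μ)
    (W : Ω → ℝ) (hW : W = fun ω => ∑ i, c i * ξ i ω)
    (hindep : iIndepFun (ZBFam m ξ ξs I) μ)
    (hI : ∀ i : Fin m, μ {ω | I ω = i} = ENNReal.ofReal ((c i) ^ 2 * ∫ ω, (ξ i ω) ^ 2 ∂μ))
    (hzb : ∀ i, IsZeroBiased μ (ξ i) (ξs i))
    (f : ℝ → ℝ) (hf : Differentiable ℝ f) (C : ℝ) (hC : ∀ x, |f x| ≤ C)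
    (hf2 : Integrable
      (fun ω => deriv f (W ω - c (I ω) * ξ (I ω) ω + c (I ω) * ξs (I ω) ω)) μ) :
    ∫ ω, W ω * f (W ω) ∂μ
      = ∫ ω, deriv f (W ω - c (I ω) * ξ (I ω) ω + c (I ω) * ξs (I ω) ω) ∂μ := by
  classical
  have hWmeas : Measurable W := by
    rw [hW]; exact Finset.measurable_sum _ fun j _ => (hmeasξ j).const_mul _
  have hfc : Continuous f := hf.continuous
  have hL1 : ∀ i, Integrable (ξ i) μ := fun i => (hL2 i).integrable one_le_two
  -- the leave-one-out sums
  set Wi : Fin m → Ω → ℝ := fun i ω => ∑ j ∈ Finset.univ.erase i, c j * ξ j ω with hWi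
  have hWimeas : ∀ i, Measurable (Wi i) := fun i =>
    Finset.measurable_sum _ fun j _ => (hmeasξ j).const_mul _
  have hsplit : ∀ i ω, W ω = Wi i ω + c i * ξ i ω := by
    intro i ω
    rw [hW]
    exact (Finset.sum_erase_add _ _ (Finset.mem_univ i)).symm
  set Q : Fin m → Ω → ℝ := fun i ω => Wi i ω + c i * ξs i ω with hQ
  have hQmeas : ∀ i, Measurable (Q i) := fun i =>
    (hWimeas i).add ((hmeasξs i).const_mul _)
  set E : Fin m → Set Ω := fun i => I ⁻¹' {i} with hE
  have hEmeas : ∀ i, MeasurableSet (E i) := fun i => hmeasI (measurableSet_singleton i)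
  have hμE : ∀ i, μ (E i) = ENNReal.ofReal ((c i) ^ 2 * ∫ ω, (ξ i ω) ^ 2 ∂μ) := by
    intro i
    rw [← hI i]
    rfl
  -- the integrand of the RHS agrees with `deriv f ∘ Q i` on `E i`
  have hQW : ∀ i ω, I ω = i →
      deriv f (W ω - c (I ω) * ξ (I ω) ω + c (I ω) * ξs (I ω) ω) = deriv f (Q i ω) := by
    intro i ω hω
    rw [hω]
    congr 1
    rw [hsplit i ω]
    ring
  -- integrability of ξ i * f(W)
  have hint1 : ∀ i, Integrable (fun ω => ξ i ω * f (W ω)) μ := by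
    intro i
    refine Integrable.mono' (((hL1 i).abs.const_mul C)) ?_ ?_
    · exact ((hmeasξ i).mul (hfc.measurable.comp hWmeas)).aestronglyMeasurable
    · filter_upwards with ω
      rw [norm_mul, Real.norm_eq_abs, Real.norm_eq_abs]
      calc |ξ i ω| * |f (W ω)| ≤ |ξ i ω| * C :=
            mul_le_mul_of_nonneg_left (hC _) (abs_nonneg _)
        _ = C * |ξ i ω| := mul_comm _ _
  -- main per-index claim
  have key : ∀ i, c i * ∫ ω, ξ i ω * f (W ω) ∂μ = ∫ ω in E i, deriv f (Q i ω) ∂μ := by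
    intro i
    by_cases hci : c i = 0
    · have h0 : μ (E i) = 0 := by
        rw [hμE i, hci]
        simp
      rw [hci, zero_mul, setIntegral_measure_zero _ h0]
    · have hindep1 := zb_indep1 c hmeasξ hmeasξs hmeasI hindep i
      have hindep2 := zb_indep2 c hmeasξ hmeasξs hmeasI hindep i
      have hindep3 := zb_indep3 c hmeasξ hmeasξs hmeasI hindep i
      set ρ := μ.map (Wi i) with hρ
      set ν := μ.map (ξ i) with hν
      set νs := μ.map (ξs i) with hνs
      haveI : IsProbabilityMeasure ρ := Measure.isProbabilityMeasure_map (hWimeas i).aemeasurable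
      haveI : IsProbabilityMeasure ν := Measure.isProbabilityMeasure_map (hmeasξ i).aemeasurable
      haveI : IsProbabilityMeasure νs := Measure.isProbabilityMeasure_map (hmeasξs i).aemeasurable
      have hpair1m : Measurable (fun ω => (Wi i ω, ξ i ω)) := (hWimeas i).prodMk (hmeasξ i)
      have hpair2m : Measurable (fun ω => (Wi i ω, ξs i ω)) := (hWimeas i).prodMk (hmeasξs i)
      have hpair1 : μ.map (fun ω => (Wi i ω, ξ i ω)) = ρ.prod ν :=
        (indepFun_iff_map_prod_eq_prod_map_map (hWimeas i).aemeasurable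
          (hmeasξ i).aemeasurable).mp hindep1
      have hpair2 : μ.map (fun ω => (Wi i ω, ξs i ω)) = ρ.prod νs :=
        (indepFun_iff_map_prod_eq_prod_map_map (hWimeas i).aemeasurable
          (hmeasξs i).aemeasurable).mp hindep2
      have hvar2 : variance (ξ i) μ = ∫ ω, (ξ i ω)^2 ∂μ := by
        have h := variance_eq_sub (hL2 i)
        rw [hmean i] at h
        simpa using h
      have hsqpos : 0 < ∫ ω, (ξ i ω)^2 ∂μ := hvar2 ▸ hvarpos i
      set p : ℝ := (c i)^2 * ∫ ω, (ξ i ω)^2 ∂μ with hpdef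
      have hppos : 0 < p := mul_pos (pow_two_pos_of_ne_zero hci) hsqpos
      have hμE' : μ (E i) = ENNReal.ofReal p := hμE i
      have hμEne : μ (E i) ≠ 0 := by
        rw [hμE']
        simp only [ne_eq, ENNReal.ofReal_eq_zero, not_le]
        exact hppos
      have hmap_restrict : (μ.restrict (E i)).map (Q i) = (μ (E i)) • μ.map (Q i) := by
        ext B hB
        rw [Measure.map_apply (hQmeas i) hB, Measure.restrict_apply ((hQmeas i) hB),
          Measure.smul_apply, Measure.map_apply (hQmeas i) hB, smul_eq_mul, Set.inter_comm]
        exact hindep3.measure_inter_preimage_eq_mul {i} B (measurableSet_singleton i) hB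
      have hQint : Integrable (fun ω => deriv f (Q i ω)) μ := by
        have hint_restrict : Integrable (fun ω => deriv f (Q i ω)) (μ.restrict (E i)) := by
          refine hf2.restrict.congr ?_
          rw [Filter.EventuallyEq, ae_restrict_iff' (hEmeas i)]
          filter_upwards with ω hω
          exact hQW i ω hω
        have h1 : Integrable (deriv f) ((μ.restrict (E i)).map (Q i)) :=
          (integrable_map_measure (measurable_deriv f).aestronglyMeasurable
            (hQmeas i).aemeasurable).mpr hint_restrict
        rw [hmap_restrict] at h1
        have h2 : Integrable (deriv f) (μ.map (Q i)) :=
          (integrable_smul_measure hμEne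
            (by rw [hμE']; exact ENNReal.ofReal_ne_top)).mp h1
        exact (integrable_map_measure (measurable_deriv f).aestronglyMeasurable
          (hQmeas i).aemeasurable).mp h2
      have hEq1 : ∫ ω in E i, deriv f (Q i ω) ∂μ = p * ∫ ω, deriv f (Q i ω) ∂μ := by
        have h1 : ∫ ω in E i, deriv f (Q i ω) ∂μ
            = ∫ x, deriv f x ∂((μ.restrict (E i)).map (Q i)) :=
          (integral_map (hQmeas i).aemeasurable
            (measurable_deriv f).aestronglyMeasurable).symm
        rw [h1, hmap_restrict, integral_smul_measure, hμE',
          ENNReal.toReal_ofReal hppos.le, smul_eq_mul,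
          integral_map (hQmeas i).aemeasurable (measurable_deriv f).aestronglyMeasurable]
      set g2 : ℝ × ℝ → ℝ := fun q => deriv f (q.1 + c i * q.2) with hg2
      have hg2m : Measurable g2 :=
        (measurable_deriv f).comp (measurable_fst.add (measurable_snd.const_mul _))
      have hg2int : Integrable g2 (ρ.prod νs) := by
        rw [← hpair2]
        exact (integrable_map_measure hg2m.aestronglyMeasurable
          hpair2m.aemeasurable).mpr hQint
      have hA : ∫ ω, deriv f (Q i ω) ∂μ = ∫ w, ∫ x, deriv f (w + c i * x) ∂νs ∂ρ := by
        have h1 : ∫ ω, deriv f (Q i ω) ∂μ = ∫ q, g2 q ∂(ρ.prod νs) := by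
          rw [← hpair2, integral_map hpair2m.aemeasurable hg2m.aestronglyMeasurable]
        rw [h1, integral_prod _ hg2int]
      set g1 : ℝ × ℝ → ℝ := fun q => q.2 * f (q.1 + c i * q.2) with hg1
      have hg1c : Continuous g1 := continuous_snd.mul
        (hfc.comp (continuous_fst.add (continuous_const.mul continuous_snd)))
      have hg1int : Integrable g1 (ρ.prod ν) := by
        rw [← hpair1]
        refine (integrable_map_measure hg1c.aestronglyMeasurable
          hpair1m.aemeasurable).mpr ?_
        refine (hint1 i).congr (Filter.Eventually.of_forall fun ω => ?_)
        show ξ i ω * f (W ω) = ξ i ω * f (Wi i ω + c i * ξ i ω)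
        rw [← hsplit i ω]
      have hB : ∫ ω, ξ i ω * f (W ω) ∂μ = ∫ w, ∫ x, x * f (w + c i * x) ∂ν ∂ρ := by
        have h1 : ∫ ω, ξ i ω * f (W ω) ∂μ = ∫ q, g1 q ∂(ρ.prod ν) := by
          rw [← hpair1, integral_map hpair1m.aemeasurable hg1c.aestronglyMeasurable]
          refine integral_congr_ae (Filter.Eventually.of_forall fun ω => ?_)
          show ξ i ω * f (W ω) = ξ i ω * f (Wi i ω + c i * ξ i ω)
          rw [← hsplit i ω]
        rw [h1, integral_prod _ hg1int]
      have hae : ∀ᵐ w ∂ρ, ∫ x, x * f (w + c i * x) ∂ν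
          = variance (ξ i) μ * (c i * ∫ x, deriv f (w + c i * x) ∂νs) := by
        filter_upwards [hg2int.prod_right_ae] with w hw
        have hm : Measurable (fun x : ℝ => deriv f (w + c i * x)) :=
          (measurable_deriv f).comp (measurable_const.add (measurable_id'.const_mul _))
        have hgd : Differentiable ℝ (fun x : ℝ => f (w + c i * x)) :=
          hf.comp ((differentiable_id.const_mul _).const_add _)
        have hI2 : Integrable (fun ω => deriv f (w + c i * ξs i ω)) μ :=
          (integrable_map_measure hm.aestronglyMeasurable (hmeasξs i).aemeasurable).mp hw
        have hint_g1 : Integrable (fun ω => ξ i ω * f (w + c i * ξ i ω)) μ := by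
          refine Integrable.mono' ((hL1 i).abs.const_mul C) ?_ ?_
          · exact ((hmeasξ i).mul ((hfc.measurable.comp (measurable_const.add
              (measurable_id'.const_mul _))).comp (hmeasξ i))).aestronglyMeasurable
          · filter_upwards with ω
            rw [norm_mul, Real.norm_eq_abs, Real.norm_eq_abs]
            calc |ξ i ω| * |f (w + c i * ξ i ω)| ≤ |ξ i ω| * C :=
                  mul_le_mul_of_nonneg_left (hC _) (abs_nonneg _)
              _ = C * |ξ i ω| := mul_comm _ _
        have hint_g2 : Integrable
            (fun ω => deriv (fun x => f (w + c i * x)) (ξs i ω)) μ := by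
          refine (hI2.const_mul (c i)).congr (Filter.Eventually.of_forall fun ω => ?_)
          exact (zb_deriv_affine f hf w (c i) (ξs i ω)).symm
        have hzg := hzb i (fun x => f (w + c i * x)) hgd hint_g1 hint_g2
        have hL : ∫ x, x * f (w + c i * x) ∂ν
            = ∫ ω, ξ i ω * f (w + c i * ξ i ω) ∂μ := by
          have hcont : Continuous (fun x : ℝ => x * f (w + c i * x)) :=
            continuous_id.mul (hfc.comp (continuous_const.add
              (continuous_const.mul continuous_id)))
          exact integral_map (hmeasξ i).aemeasurable hcont.aestronglyMeasurable
        have hR : ∫ ω, deriv (fun x => f (w + c i * x)) (ξs i ω) ∂μ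
            = c i * ∫ x, deriv f (w + c i * x) ∂νs := by
          rw [integral_congr_ae (Filter.Eventually.of_forall fun ω =>
            (zb_deriv_affine f hf w (c i) (ξs i ω))), integral_const_mul]
          congr 1
          exact (integral_map (hmeasξs i).aemeasurable hm.aestronglyMeasurable).symm
        rw [hL, hzg, hR]
      have houter : ∫ w, ∫ x, x * f (w + c i * x) ∂ν ∂ρ
          = variance (ξ i) μ * (c i * ∫ w, ∫ x, deriv f (w + c i * x) ∂νs ∂ρ) := by
        rw [integral_congr_ae hae, integral_const_mul, integral_const_mul]
      rw [hB, houter, hEq1, hA, hpdef, hvar2]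
      ring
  -- decompose the RHS over the partition {I = i}
  have hIndInt : ∀ i, Integrable ((E i).indicator (fun ω => deriv f (Q i ω))) μ := by
    intro i
    refine (hf2.indicator (hEmeas i)).congr (Filter.Eventually.of_forall fun ω => ?_)
    by_cases hω : ω ∈ E i
    · rw [Set.indicator_of_mem hω, Set.indicator_of_mem hω, hQW i ω hω]
    · rw [Set.indicator_of_notMem hω, Set.indicator_of_notMem hω]
  have hRHS : ∫ ω, deriv f (W ω - c (I ω) * ξ (I ω) ω + c (I ω) * ξs (I ω) ω) ∂μ
      = ∑ i, ∫ ω in E i, deriv f (Q i ω) ∂μ := by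
    have hdecomp : ∀ ω, deriv f (W ω - c (I ω) * ξ (I ω) ω + c (I ω) * ξs (I ω) ω)
        = ∑ i, (E i).indicator (fun ω => deriv f (Q i ω)) ω := by
      intro ω
      rw [Finset.sum_eq_single (I ω)]
      · rw [Set.indicator_of_mem (show ω ∈ E (I ω) from rfl)]
        exact hQW (I ω) ω rfl
      · intro j _ hj
        apply Set.indicator_of_notMem
        intro h
        exact hj (show I ω = j from h).symm
      · intro h
        exact absurd (Finset.mem_univ (I ω)) h
    rw [integral_congr_ae (Filter.Eventually.of_forall hdecomp),
      integral_finset_sum _ fun i _ => hIndInt i]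
    exact Finset.sum_congr rfl fun i _ => integral_indicator (hEmeas i)
  -- decompose the LHS
  have hLHS : ∫ ω, W ω * f (W ω) ∂μ = ∑ i, c i * ∫ ω, ξ i ω * f (W ω) ∂μ := by
    have hsum : ∀ ω, W ω * f (W ω) = ∑ i, c i * (ξ i ω * f (W ω)) := by
      intro ω
      rw [hW]
      rw [Finset.sum_mul]
      exact Finset.sum_congr rfl fun i _ => mul_assoc _ _ _
    rw [integral_congr_ae (Filter.Eventually.of_forall hsum),
      integral_finset_sum _ fun i _ => (hint1 i).const_mul (c i)]
    exact Finset.sum_congr rfl fun i _ => integral_const_mul _ _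
  rw [hLHS, hRHS]
  exact Finset.sum_congr rfl fun i _ => key i

end Main

theorem stmt_5 {Ω : Type*} [MeasurableSpace Ω] (μ : Measure Ω) [IsProbabilityMeasure μ]
    (m : ℕ) (hm : 1 ≤ m) (c : Fin m → ℝ)
    (ξ ξs : Fin m → Ω → ℝ) (I : Ω → Fin m)
    (hmeasξ : ∀ i, Measurable (ξ i)) (hmeasξs : ∀ i, Measurable (ξs i))
    (hmeasI : Measurable I)
    (hL2 : ∀ i, MemLp (ξ i) 2 μ)
    (hmean : ∀ i, ∫ ω, ξ i ω ∂μ = 0)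
    (hvarpos : ∀ i, 0 < variance (ξ i) μ)
    (hc : ∑ i, (c i) ^ 2 = 1)
    (W : Ω → ℝ) (hW : W = fun ω => ∑ i, c i * ξ i ω)
    (hVarW : variance W μ = 1)
    -- the ξ i, the ξs i and the index I are all mutually independent
    (hindep : iIndepFun (ZBFam m ξ ξs I) μ)
    (hI : ∀ i : Fin m, μ {ω | I ω = i} = ENNReal.ofReal ((c i) ^ 2 * ∫ ω, (ξ i ω) ^ 2 ∂μ))
    (hzb : ∀ i, IsZeroBiased μ (ξ i) (ξs i)) :
    IsZeroBiased μ W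
      (fun ω => W ω - c (I ω) * ξ (I ω) ω + c (I ω) * ξs (I ω) ω) := by
  intro f hf hf1 hf2
  rw [hVarW, one_mul]
  show ∫ ω, W ω * f (W ω) ∂μ
    = ∫ ω, deriv f (W ω - c (I ω) * ξ (I ω) ω + c (I ω) * ξs (I ω) ω) ∂μ
  have hf2 : Integrable
      (fun ω => deriv f (W ω - c (I ω) * ξ (I ω) ω + c (I ω) * ξs (I ω) ω)) μ := hf2
  have hWmeas : Measurable W := by
    rw [hW]; exact Finset.measurable_sum _ fun j _ => (hmeasξ j).const_mul _
  have hcI : Measurable (fun ω => c (I ω)) := measurable_from_top.comp hmeasI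
  have hxiI : Measurable (fun ω => ξ (I ω) ω) := by
    have h1 : Measurable (fun q : Ω × Fin m => ξ q.2 q.1) :=
      measurable_from_prod_countable_left (fun i => hmeasξ i)
    exact h1.comp (measurable_id.prodMk hmeasI)
  have hxsI : Measurable (fun ω => ξs (I ω) ω) := by
    have h1 : Measurable (fun q : Ω × Fin m => ξs q.2 q.1) :=
      measurable_from_prod_countable_left (fun i => hmeasξs i)
    exact h1.comp (measurable_id.prodMk hmeasI)
  have hWsmeas : Measurable
      (fun ω => W ω - c (I ω) * ξ (I ω) ω + c (I ω) * ξs (I ω) ω) :=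
    (hWmeas.sub (hcI.mul hxiI)).add (hcI.mul hxsI)
  -- truncations
  set N : ℕ → ℝ := fun n => (n : ℝ) + 1 with hN
  have hNpos : ∀ n, 0 < N n := fun n => by positivity
  set F : ℕ → ℝ → ℝ := fun n x => (N n)^2 * f x / ((N n)^2 + (f x)^2) with hF
  have hdenpos : ∀ n x, 0 < (N n)^2 + (f x)^2 := fun n x => by positivity
  have hFdiff : ∀ n, Differentiable ℝ (F n) := fun n =>
    (hf.const_mul _).div ((differentiable_const _).add (hf.pow 2))
      (fun x => (hdenpos n x).ne')
  set coef : ℕ → ℝ → ℝ :=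
    fun n x => (N n)^2 * ((N n)^2 - (f x)^2) / ((N n)^2 + (f x)^2)^2 with hcoef
  have hderiv : ∀ n x, deriv (F n) x = deriv f x * coef n x := by
    intro n x
    have h1 : HasDerivAt (fun y => (N n)^2 * f y) ((N n)^2 * deriv f x) x :=
      ((hf x).hasDerivAt.const_mul _)
    have h2 : HasDerivAt (fun y => (N n)^2 + (f y)^2)
        ((2 : ℕ) * (f x)^(1 : ℕ) * deriv f x) x :=
      ((hf x).hasDerivAt.pow 2).const_add _
    have h3 := h1.div h2 (hdenpos n x).ne'
    rw [show F n = (fun y => (N n)^2 * f y) / (fun y => (N n)^2 + (f y)^2) from rfl,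
      h3.deriv, hcoef]
    field_simp
    ring
  have hcoef_le : ∀ n x, |coef n x| ≤ 1 := by
    intro n x
    have hu : (0:ℝ) ≤ (f x)^2 := sq_nonneg _
    have hN2 : (0:ℝ) < (N n)^2 := by positivity
    rw [hcoef]
    rw [abs_div, abs_of_nonneg (by positivity : (0:ℝ) ≤ ((N n)^2+(f x)^2)^2),
      div_le_one (by positivity), abs_mul, abs_of_nonneg hN2.le]
    calc (N n)^2 * |(N n)^2 - (f x)^2| ≤ (N n)^2 * ((N n)^2 + (f x)^2) := by
          refine mul_le_mul_of_nonneg_left ?_ hN2.le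
          rw [abs_le]
          constructor <;> nlinarith
      _ ≤ ((N n)^2+(f x)^2)^2 := by nlinarith
  have hFabs_le : ∀ n x, |F n x| ≤ |f x| := by
    intro n x
    rw [hF]
    rw [abs_div, abs_of_nonneg (hdenpos n x).le, abs_mul, abs_of_nonneg (sq_nonneg (N n)),
      div_le_iff₀ (hdenpos n x)]
    nlinarith [abs_nonneg (f x), sq_nonneg (f x), sq_abs (f x)]
  have hFbound : ∀ n x, |F n x| ≤ N n := by
    intro n x
    rw [hF]
    rw [abs_div, abs_of_nonneg (hdenpos n x).le, abs_mul, abs_of_nonneg (sq_nonneg (N n)),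
      div_le_iff₀ (hdenpos n x)]
    nlinarith [sq_nonneg (N n - |f x|), abs_nonneg (f x), sq_abs (f x), hNpos n]
  -- basic limit
  have hNsq : Filter.Tendsto (fun n : ℕ => (N n)^2) Filter.atTop Filter.atTop := by
    have h0 : Filter.Tendsto N Filter.atTop Filter.atTop :=
      Filter.tendsto_atTop_add_const_right _ 1 tendsto_natCast_atTop_atTop
    have := h0.atTop_mul_atTop₀ h0
    refine this.congr fun n => ?_
    rw [sq]
  have hinv : ∀ u : ℝ, Filter.Tendsto (fun n : ℕ => u^2 / (N n)^2)
      Filter.atTop (nhds 0) := fun u => Filter.Tendsto.div_atTop tendsto_const_nhds hNsq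
  have htendF : ∀ x, Filter.Tendsto (fun n => F n x) Filter.atTop (nhds (f x)) := by
    intro x
    have h1 : Filter.Tendsto (fun n : ℕ => f x / (1 + (f x)^2 / (N n)^2))
        Filter.atTop (nhds (f x)) := by
      have := Filter.Tendsto.div (tendsto_const_nhds (x := f x))
        ((tendsto_const_nhds (x := (1:ℝ))).add (hinv (f x))) (by norm_num)
      simpa [Pi.div_def] using this
    refine h1.congr fun n => ?_
    rw [hF]
    have hNn := (hNpos n).ne'
    field_simp
  have htendD : ∀ x, Filter.Tendsto (fun n => deriv (F n) x)
      Filter.atTop (nhds (deriv f x)) := by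
    intro x
    have h1 : Filter.Tendsto (fun n : ℕ => (1 - (f x)^2/(N n)^2) / (1 + (f x)^2/(N n)^2)^2)
        Filter.atTop (nhds 1) := by
      have := Filter.Tendsto.div
        ((tendsto_const_nhds (x := (1:ℝ))).sub (hinv (f x)))
        (((tendsto_const_nhds (x := (1:ℝ))).add (hinv (f x))).pow 2) (by norm_num)
      simpa [Pi.div_def] using this
    have h2 : Filter.Tendsto (fun n : ℕ => coef n x) Filter.atTop (nhds 1) := by
      refine h1.congr fun n => ?_
      rw [hcoef]
      have hNn := (hNpos n).ne'
      field_simp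
    have := (tendsto_const_nhds (x := deriv f x)).mul h2
    rw [mul_one] at this
    refine this.congr fun n => (hderiv n x).symm
  -- integrability for the truncations
  have hint2 : ∀ n, Integrable
      (fun ω => deriv (F n) (W ω - c (I ω) * ξ (I ω) ω + c (I ω) * ξs (I ω) ω)) μ := by
    intro n
    refine Integrable.mono' hf2.abs ?_ ?_
    · have : Continuous (coef n) := by
        rw [hcoef]
        exact ((continuous_const.mul (continuous_const.sub ((hf.continuous).pow 2))).div
          ((continuous_const.add ((hf.continuous).pow 2)).pow 2)
          (fun x => by positivity))
      have hmeas : Measurable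
          (fun ω => deriv f (W ω - c (I ω) * ξ (I ω) ω + c (I ω) * ξs (I ω) ω)
            * coef n (W ω - c (I ω) * ξ (I ω) ω + c (I ω) * ξs (I ω) ω)) :=
        ((measurable_deriv f).comp hWsmeas).mul (this.measurable.comp hWsmeas)
      refine (hmeas.aestronglyMeasurable).congr ?_
      filter_upwards with ω
      rw [hderiv]
    · filter_upwards with ω
      rw [Real.norm_eq_abs, hderiv, abs_mul]
      calc |deriv f _| * |coef n _| ≤ |deriv f _| * 1 :=
            mul_le_mul_of_nonneg_left (hcoef_le n _) (abs_nonneg _)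
        _ = _ := by rw [mul_one]
  have heq : ∀ n, ∫ ω, W ω * F n (W ω) ∂μ
      = ∫ ω, deriv (F n) (W ω - c (I ω) * ξ (I ω) ω + c (I ω) * ξs (I ω) ω) ∂μ :=
    fun n => zb_bounded μ m c ξ ξs I hmeasξ hmeasξs hmeasI hL2 hmean hvarpos W hW
      hindep hI hzb (F n) (hFdiff n) (N n) (fun x => hFbound n x) (hint2 n)
  -- dominated convergence on both sides
  have ht1 : Filter.Tendsto (fun n => ∫ ω, W ω * F n (W ω) ∂μ)
      Filter.atTop (nhds (∫ ω, W ω * f (W ω) ∂μ)) := by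
    refine tendsto_integral_of_dominated_convergence (fun ω => |W ω * f (W ω)|)
      (fun n => ?_) hf1.abs (fun n => ?_) ?_
    · exact (hWmeas.mul (((hFdiff n).continuous.measurable).comp
        hWmeas)).aestronglyMeasurable
    · filter_upwards with ω
      rw [Real.norm_eq_abs, abs_mul, abs_mul]
      exact mul_le_mul_of_nonneg_left (hFabs_le n _) (abs_nonneg _)
    · filter_upwards with ω
      exact (htendF (W ω)).const_mul (W ω)
  have ht2 : Filter.Tendsto
      (fun n => ∫ ω, deriv (F n) (W ω - c (I ω) * ξ (I ω) ω + c (I ω) * ξs (I ω) ω) ∂μ)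
      Filter.atTop
      (nhds (∫ ω, deriv f (W ω - c (I ω) * ξ (I ω) ω + c (I ω) * ξs (I ω) ω) ∂μ)) := by
    refine tendsto_integral_of_dominated_convergence
      (fun ω => |deriv f (W ω - c (I ω) * ξ (I ω) ω + c (I ω) * ξs (I ω) ω)|)
      (fun n => (hint2 n).aestronglyMeasurable) hf2.abs (fun n => ?_) ?_
    · filter_upwards with ω
      rw [Real.norm_eq_abs, hderiv, abs_mul]
      calc |deriv f _| * |coef n _| ≤ |deriv f _| * 1 :=
            mul_le_mul_of_nonneg_left (hcoef_le n _) (abs_nonneg _)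
        _ = _ := by rw [mul_one]
    · filter_upwards with ω
      exact htendD _
  have heqfun : (fun n => ∫ ω, W ω * F n (W ω) ∂μ)
      = fun n => ∫ ω, deriv (F n) (W ω - c (I ω) * ξ (I ω) ω + c (I ω) * ξs (I ω) ω) ∂μ :=
    funext heq
  rw [heqfun] at ht1
  exact tendsto_nhds_unique ht1 ht2
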